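/- arXiv:2504.11593 — 3 statements merged into one kernel-verified Lean document; each statement's English description precedes it below -/
import Mathlib

section
/- Let $M$ be a probability measure on $[0,1]$ and define $\Psi(t) = \int_{[0,1]} \log(1 - y + y t)\, M(\mathrm{d}y)$ for $t > 0$. If $M(\{0\}) + M(\{1\}) < 1$, then the function $u \mapsto \Psi(e^u)$ is strictly convex on $\mathbb{R}$, with second derivative $\int_{[0,1]} \frac{(1-y) y e^u}{(1 - y + y e^u)^2}\, M(\mathrm{d}y) > 0$. -/
open MeasureTheory

private lemma den_pos {y u : ℝ} (h0 : 0 ≤ y) (h1 : y ≤ 1) :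
    0 < 1 - y + y * Real.exp u := by
  rcases eq_or_lt_of_le h1 with h | h
  · subst h; simpa using Real.exp_pos u
  · nlinarith [mul_nonneg h0 (Real.exp_pos u).le]

private lemma log_bound {y u : ℝ} (h0 : 0 ≤ y) (h1 : y ≤ 1) :
    ‖Real.log (1 - y + y * Real.exp u)‖ ≤ |u| := by
  have hd := den_pos h0 h1 (u := u)
  rcases le_or_gt 0 u with hu | hu
  · have hE : 1 ≤ Real.exp u := Real.one_le_exp hu
    have hden1 : 1 ≤ 1 - y + y * Real.exp u := by nlinarith
    have hdenE : 1 - y + y * Real.exp u ≤ Real.exp u := by nlinarith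
    rw [Real.norm_eq_abs, abs_of_nonneg (Real.log_nonneg hden1), abs_of_nonneg hu]
    calc Real.log (1 - y + y * Real.exp u) ≤ Real.log (Real.exp u) :=
          Real.log_le_log hd hdenE
      _ = u := Real.log_exp u
  · have hE : Real.exp u < 1 := by
      have := Real.exp_lt_exp.mpr hu; simpa using this
    have hden1 : 1 - y + y * Real.exp u ≤ 1 := by nlinarith
    have hdenE : Real.exp u ≤ 1 - y + y * Real.exp u := by nlinarith
    have hlog1 : Real.log (1 - y + y * Real.exp u) ≤ 0 :=
      Real.log_nonpos hd.le hden1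
    have hlog2 : u ≤ Real.log (1 - y + y * Real.exp u) := by
      calc u = Real.log (Real.exp u) := (Real.log_exp u).symm
        _ ≤ _ := Real.log_le_log (Real.exp_pos u) hdenE
    rw [Real.norm_eq_abs, abs_of_nonpos hlog1, abs_of_neg hu]
    linarith

private lemma hasDerivAt_inner1 {y : ℝ} (h0 : 0 ≤ y) (h1 : y ≤ 1) (u : ℝ) :
    HasDerivAt (fun u => Real.log (1 - y + y * Real.exp u))
      (y * Real.exp u / (1 - y + y * Real.exp u)) u := by
  have hd := den_pos h0 h1 (u := u)
  have h : HasDerivAt (fun u => 1 - y + y * Real.exp u) (y * Real.exp u) u :=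
    ((Real.hasDerivAt_exp u).const_mul y).const_add (1 - y)
  exact h.log hd.ne'

private lemma hasDerivAt_inner2 {y : ℝ} (h0 : 0 ≤ y) (h1 : y ≤ 1) (u : ℝ) :
    HasDerivAt (fun u => y * Real.exp u / (1 - y + y * Real.exp u))
      ((1 - y) * y * Real.exp u / (1 - y + y * Real.exp u) ^ 2) u := by
  have hd := den_pos h0 h1 (u := u)
  have hnum : HasDerivAt (fun u => y * Real.exp u) (y * Real.exp u) u :=
    (Real.hasDerivAt_exp u).const_mul y
  have hden : HasDerivAt (fun u => 1 - y + y * Real.exp u) (y * Real.exp u) u :=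
    ((Real.hasDerivAt_exp u).const_mul y).const_add (1 - y)
  have h : HasDerivAt (fun u => y * Real.exp u / (1 - y + y * Real.exp u)) _ u :=
    hnum.div hden hd.ne'
  convert h using 1
  ring

private lemma bound1 {y u : ℝ} (h0 : 0 ≤ y) (h1 : y ≤ 1) :
    ‖y * Real.exp u / (1 - y + y * Real.exp u)‖ ≤ 1 := by
  have hd := den_pos h0 h1 (u := u)
  rw [Real.norm_eq_abs, abs_div, abs_of_nonneg (mul_nonneg h0 (Real.exp_pos u).le),
    abs_of_pos hd, div_le_one hd]
  nlinarith

private lemma bound2 {y u : ℝ} (h0 : 0 ≤ y) (h1 : y ≤ 1) :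
    ‖(1 - y) * y * Real.exp u / (1 - y + y * Real.exp u) ^ 2‖ ≤ 1 := by
  have hd := den_pos h0 h1 (u := u)
  have hnum : 0 ≤ (1 - y) * y * Real.exp u :=
    mul_nonneg (mul_nonneg (sub_nonneg.mpr h1) h0) (Real.exp_pos u).le
  rw [Real.norm_eq_abs, abs_div, abs_of_nonneg hnum, abs_of_nonneg (by positivity),
    div_le_one (by positivity)]
  nlinarith [mul_nonneg h0 (Real.exp_pos u).le, mul_nonneg (sub_nonneg.mpr h1)
    (mul_nonneg h0 (Real.exp_pos u).le)]

/-- For a probability measure `M` on `[0,1]` with `M({0}) + M({1}) < 1`, the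
function `u ↦ Ψ(e^u)` is strictly convex with the stated positive second
derivative, where `Ψ(t) = ∫ log(1 - y + y t) dM(y)`. -/
theorem stmt_3 (M : Measure ℝ) [IsProbabilityMeasure M]
    (hM : M (Set.Icc 0 1) = 1) (hatom : M {0} + M {1} < 1) :
    StrictConvexOn ℝ Set.univ
      (fun u : ℝ => ∫ y in Set.Icc (0:ℝ) 1, Real.log (1 - y + y * Real.exp u) ∂M) ∧
    ∀ u : ℝ,
      deriv (deriv
        (fun u : ℝ => ∫ y in Set.Icc (0:ℝ) 1, Real.log (1 - y + y * Real.exp u) ∂M)) u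
        = ∫ y in Set.Icc (0:ℝ) 1,
            ((1 - y) * y * Real.exp u) / (1 - y + y * Real.exp u) ^ 2 ∂M ∧
      0 < ∫ y in Set.Icc (0:ℝ) 1,
            ((1 - y) * y * Real.exp u) / (1 - y + y * Real.exp u) ^ 2 ∂M := by
  set μ := M.restrict (Set.Icc (0:ℝ) 1) with hμdef
  have hae : ∀ᵐ y ∂μ, y ∈ Set.Icc (0:ℝ) 1 := ae_restrict_mem measurableSet_Icc
  -- measurability of the integrands
  have hmeas1 : ∀ u : ℝ, AEStronglyMeasurable
      (fun y => Real.log (1 - y + y * Real.exp u)) μ := by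
    intro u
    exact (Real.measurable_log.comp (by fun_prop)).aestronglyMeasurable
  have hmeas2 : ∀ u : ℝ, AEStronglyMeasurable
      (fun y : ℝ => y * Real.exp u / (1 - y + y * Real.exp u)) μ := by
    intro u; exact (by fun_prop : Measurable _).aestronglyMeasurable
  have hmeas3 : ∀ u : ℝ, AEStronglyMeasurable
      (fun y : ℝ => (1 - y) * y * Real.exp u / (1 - y + y * Real.exp u) ^ 2) μ := by
    intro u; exact (by fun_prop : Measurable _).aestronglyMeasurable
  -- integrability
  have hint1 : ∀ u : ℝ, Integrable
      (fun y => Real.log (1 - y + y * Real.exp u)) μ := by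
    intro u
    refine (integrable_const (|u|)).mono' (hmeas1 u) ?_
    exact hae.mono fun y hy => log_bound hy.1 hy.2
  have hint3 : ∀ u : ℝ, Integrable
      (fun y : ℝ => (1 - y) * y * Real.exp u / (1 - y + y * Real.exp u) ^ 2) μ := by
    intro u
    refine (integrable_const (1:ℝ)).mono' (hmeas3 u) ?_
    exact hae.mono fun y hy => bound2 hy.1 hy.2
  -- first derivative
  have key1 : ∀ u₀ : ℝ, HasDerivAt
      (fun u : ℝ => ∫ y in Set.Icc (0:ℝ) 1, Real.log (1 - y + y * Real.exp u) ∂M)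
      (∫ y in Set.Icc (0:ℝ) 1, y * Real.exp u₀ / (1 - y + y * Real.exp u₀) ∂M) u₀ := by
    intro u₀
    have h := hasDerivAt_integral_of_dominated_loc_of_deriv_le (μ := μ)
      (F := fun u y => Real.log (1 - y + y * Real.exp u))
      (F' := fun u y => y * Real.exp u / (1 - y + y * Real.exp u))
      (x₀ := u₀) (bound := fun _ => (1:ℝ)) (s := Metric.ball u₀ 1) (Metric.ball_mem_nhds u₀ zero_lt_one)
      (Filter.Eventually.of_forall fun u => hmeas1 u) (hint1 u₀) (hmeas2 u₀)
      (hae.mono fun y hy u _ => bound1 hy.1 hy.2)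
      (integrable_const 1)
      (hae.mono fun y hy u _ => hasDerivAt_inner1 hy.1 hy.2 u)
    exact h.2
  -- second derivative
  have key2 : ∀ u₀ : ℝ, HasDerivAt
      (fun u : ℝ => ∫ y in Set.Icc (0:ℝ) 1, y * Real.exp u / (1 - y + y * Real.exp u) ∂M)
      (∫ y in Set.Icc (0:ℝ) 1,
        (1 - y) * y * Real.exp u₀ / (1 - y + y * Real.exp u₀) ^ 2 ∂M) u₀ := by
    intro u₀
    have h := hasDerivAt_integral_of_dominated_loc_of_deriv_le (μ := μ)
      (F := fun u y => y * Real.exp u / (1 - y + y * Real.exp u))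
      (F' := fun u y => (1 - y) * y * Real.exp u / (1 - y + y * Real.exp u) ^ 2)
      (x₀ := u₀) (bound := fun _ => (1:ℝ)) (s := Metric.ball u₀ 1) (Metric.ball_mem_nhds u₀ zero_lt_one)
      (Filter.Eventually.of_forall fun u => hmeas2 u) ?_ (hmeas3 u₀)
      (hae.mono fun y hy u _ => bound2 hy.1 hy.2)
      (integrable_const 1)
      (hae.mono fun y hy u _ => hasDerivAt_inner2 hy.1 hy.2 u)
    · exact h.2
    · refine (integrable_const (1:ℝ)).mono' (hmeas2 u₀) ?_
      exact hae.mono fun y hy => bound1 hy.1 hy.2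
  have hd1 : deriv (fun u : ℝ =>
        ∫ y in Set.Icc (0:ℝ) 1, Real.log (1 - y + y * Real.exp u) ∂M)
      = fun u => ∫ y in Set.Icc (0:ℝ) 1, y * Real.exp u / (1 - y + y * Real.exp u) ∂M :=
    funext fun u => (key1 u).deriv
  have hd2 : ∀ u : ℝ, deriv (deriv (fun u : ℝ =>
        ∫ y in Set.Icc (0:ℝ) 1, Real.log (1 - y + y * Real.exp u) ∂M)) u
      = ∫ y in Set.Icc (0:ℝ) 1,
          (1 - y) * y * Real.exp u / (1 - y + y * Real.exp u) ^ 2 ∂M := by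
    intro u
    rw [hd1]
    exact (key2 u).deriv
  -- positivity of second derivative
  have hIoo : 0 < M (Set.Ioo (0:ℝ) 1) := by
    by_contra h
    push_neg at h
    have h0 : M (Set.Ioo (0:ℝ) 1) = 0 := le_antisymm (by simpa using h) zero_le
    have hsub : Set.Icc (0:ℝ) 1 ⊆ {0} ∪ (Set.Ioo (0:ℝ) 1 ∪ {1}) := by
      intro x hx
      rcases eq_or_lt_of_le hx.1 with h1 | h1
      · exact Or.inl (by simp [← h1])
      rcases eq_or_lt_of_le hx.2 with h2 | h2
      · exact Or.inr (Or.inr (by simp [h2]))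
      · exact Or.inr (Or.inl ⟨h1, h2⟩)
    have := measure_mono (μ := M) hsub
    rw [hM] at this
    have hle : M ({0} ∪ (Set.Ioo (0:ℝ) 1 ∪ {1})) ≤ M {0} + (M (Set.Ioo 0 1) + M {1}) :=
      le_trans (measure_union_le _ _) (by gcongr; exact measure_union_le _ _)
    rw [h0, zero_add] at hle
    exact absurd (le_trans this hle) (not_le.mpr hatom)
  have hpos : ∀ u : ℝ, 0 < ∫ y in Set.Icc (0:ℝ) 1,
      (1 - y) * y * Real.exp u / (1 - y + y * Real.exp u) ^ 2 ∂M := by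
    intro u
    have hnn : 0 ≤ᵐ[μ] fun y : ℝ =>
        (1 - y) * y * Real.exp u / (1 - y + y * Real.exp u) ^ 2 := by
      refine hae.mono fun y hy => ?_
      have hd := den_pos hy.1 hy.2 (u := u)
      exact div_nonneg (mul_nonneg (mul_nonneg (sub_nonneg.mpr hy.2) hy.1)
        (Real.exp_pos u).le) (sq_nonneg _)
    rw [show (∫ y in Set.Icc (0:ℝ) 1,
        (1 - y) * y * Real.exp u / (1 - y + y * Real.exp u) ^ 2 ∂M)
        = ∫ y, (1 - y) * y * Real.exp u / (1 - y + y * Real.exp u) ^ 2 ∂μ from rfl,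
      integral_pos_iff_support_of_nonneg_ae hnn (hint3 u)]
    have hsub : Set.Ioo (0:ℝ) 1 ⊆ Function.support
        (fun y : ℝ => (1 - y) * y * Real.exp u / (1 - y + y * Real.exp u) ^ 2) := by
      intro y hy
      have hd := den_pos (le_of_lt hy.1) (le_of_lt hy.2) (u := u)
      have hnum : 0 < (1 - y) * y * Real.exp u :=
        mul_pos (mul_pos (by linarith [hy.2]) hy.1) (Real.exp_pos u)
      exact ne_of_gt (div_pos hnum (by positivity))
    refine lt_of_lt_of_le ?_ (measure_mono hsub)
    rw [hμdef, Measure.restrict_apply measurableSet_Ioo,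
      Set.inter_eq_left.mpr Set.Ioo_subset_Icc_self]
    exact hIoo
  refine ⟨?_, fun u => ⟨hd2 u, hpos u⟩⟩
  have hdiff : Differentiable ℝ (fun u : ℝ =>
      ∫ y in Set.Icc (0:ℝ) 1, Real.log (1 - y + y * Real.exp u) ∂M) :=
    fun u => (key1 u).differentiableAt
  have hcont : Continuous (fun u : ℝ =>
      ∫ y in Set.Icc (0:ℝ) 1, Real.log (1 - y + y * Real.exp u) ∂M) :=
    hdiff.continuous
  refine strictConvexOn_of_deriv2_pos convex_univ hcont.continuousOn fun x _ => ?_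
  show 0 < deriv (deriv (fun u : ℝ =>
      ∫ y in Set.Icc (0:ℝ) 1, Real.log (1 - y + y * Real.exp u) ∂M)) x
  rw [hd2 x]
  exact hpos x
end

section
/- Let $M$ be a probability measure on $[0,1]$ and define $\Phi(t) = t \int_{[0,1]} \frac{y}{1 - y + y t}\, M(\mathrm{d}y)$ for $t > 0$. Then $\lim_{t \to 0+} \Phi(t) = M(\{1\})$ and $\lim_{t \to +\infty} \Phi(t) = M((0,1]) = 1 - M(\{0\})$. Moreover, if $M(\{0\}) + M(\{1\}) < 1$, then $\Phi$ is a strictly increasing continuous bijection from $(0,\infty)$ onto $(M(\{1\}), 1 - M(\{0\}))$. -/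
open MeasureTheory Filter

lemma aux_denom_pos {y t : ℝ} (hy0 : 0 ≤ y) (hy1 : y ≤ 1) (ht : 0 < t) :
    0 < 1 - y + y * t := by
  rcases eq_or_lt_of_le hy1 with h | h
  · rw [h]; simpa using ht
  · have : 0 ≤ y * t := mul_nonneg hy0 ht.le
    linarith

lemma aux_g_nonneg {y t : ℝ} (hy0 : 0 ≤ y) (hy1 : y ≤ 1) (ht : 0 < t) :
    0 ≤ t * (y / (1 - y + y * t)) :=
  mul_nonneg ht.le (div_nonneg hy0 (aux_denom_pos hy0 hy1 ht).le)

lemma aux_g_le_one {y t : ℝ} (hy0 : 0 ≤ y) (hy1 : y ≤ 1) (ht : 0 < t) :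
    t * (y / (1 - y + y * t)) ≤ 1 := by
  rw [← mul_div_assoc, div_le_one (aux_denom_pos hy0 hy1 ht)]
  nlinarith

lemma aux_g_lt_one {y t : ℝ} (hy0 : 0 ≤ y) (hy1 : y < 1) (ht : 0 < t) :
    t * (y / (1 - y + y * t)) < 1 := by
  rw [← mul_div_assoc, div_lt_one (aux_denom_pos hy0 hy1.le ht)]
  nlinarith

lemma aux_g_one {t : ℝ} (ht : 0 < t) :
    t * ((1:ℝ) / (1 - 1 + 1 * t)) = 1 := by
  field_simp
  ring

lemma aux_g_mono {y t₁ t₂ : ℝ} (hy0 : 0 ≤ y) (hy1 : y ≤ 1) (ht₁ : 0 < t₁) (h12 : t₁ ≤ t₂) :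
    t₁ * (y / (1 - y + y * t₁)) ≤ t₂ * (y / (1 - y + y * t₂)) := by
  have d1 := aux_denom_pos hy0 hy1 ht₁
  have d2 := aux_denom_pos hy0 hy1 (ht₁.trans_le h12)
  rw [← mul_div_assoc, ← mul_div_assoc, div_le_div_iff₀ d1 d2]
  nlinarith [mul_nonneg (mul_nonneg hy0 (by linarith : (0:ℝ) ≤ 1 - y))
    (by linarith : (0:ℝ) ≤ t₂ - t₁)]

lemma aux_g_strictMono {y t₁ t₂ : ℝ} (hy0 : 0 < y) (hy1 : y < 1) (ht₁ : 0 < t₁)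
    (h12 : t₁ < t₂) :
    t₁ * (y / (1 - y + y * t₁)) < t₂ * (y / (1 - y + y * t₂)) := by
  have d1 := aux_denom_pos hy0.le hy1.le ht₁
  have d2 := aux_denom_pos hy0.le hy1.le (ht₁.trans h12)
  rw [← mul_div_assoc, ← mul_div_assoc, div_lt_div_iff₀ d1 d2]
  nlinarith [mul_pos (mul_pos hy0 (by linarith : (0:ℝ) < 1 - y))
    (by linarith : (0:ℝ) < t₂ - t₁)]

lemma aux_meas (t : ℝ) : Measurable fun y : ℝ => y / (1 - y + y * t) :=
  measurable_id.div ((measurable_const.sub measurable_id).add (measurable_id.mul_const t))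

lemma aux_integrableOn (M : Measure ℝ) [IsProbabilityMeasure M] {t : ℝ} (ht : 0 < t) :
    IntegrableOn (fun y : ℝ => t * (y / (1 - y + y * t))) (Set.Icc 0 1) M := by
  apply Integrable.mono' (integrable_const (1:ℝ))
    (((aux_meas t).const_mul t).aestronglyMeasurable)
  filter_upwards [ae_restrict_mem measurableSet_Icc] with y hy
  rw [Real.norm_eq_abs, abs_of_nonneg (aux_g_nonneg hy.1 hy.2 ht)]
  exact aux_g_le_one hy.1 hy.2 ht

lemma aux_int_lt (M : Measure ℝ) [IsProbabilityMeasure M] {f g : ℝ → ℝ}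
    (hf : IntegrableOn f (Set.Icc 0 1) M) (hg : IntegrableOn g (Set.Icc 0 1) M)
    (hle : ∀ y ∈ Set.Icc (0:ℝ) 1, f y ≤ g y)
    (hstrict : ∀ y ∈ Set.Ioo (0:ℝ) 1, f y < g y)
    (hIoo : 0 < M (Set.Ioo 0 1)) :
    ∫ y in Set.Icc (0:ℝ) 1, f y ∂M < ∫ y in Set.Icc (0:ℝ) 1, g y ∂M := by
  rw [← sub_pos, ← integral_sub hg hf]
  have h1 : 0 ≤ᵐ[M.restrict (Set.Icc 0 1)] fun y => g y - f y := by
    filter_upwards [ae_restrict_mem measurableSet_Icc] with y hy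
    exact sub_nonneg.2 (hle y hy)
  refine (setIntegral_pos_iff_support_of_nonneg_ae h1 (hg.sub hf)).2 ?_
  refine lt_of_lt_of_le hIoo (measure_mono ?_)
  intro y hy
  exact ⟨sub_ne_zero.2 (hstrict y hy).ne', Set.Ioo_subset_Icc_self hy⟩

lemma aux_indicator_one_int (M : Measure ℝ) [IsProbabilityMeasure M] :
    ∫ y in Set.Icc (0:ℝ) 1, Set.indicator {1} (fun _ => (1:ℝ)) y ∂M = (M {1}).toReal := by
  rw [integral_indicator (measurableSet_singleton 1), setIntegral_const,
    measureReal_restrict_apply (measurableSet_singleton 1)]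
  have : ({1} : Set ℝ) ∩ Set.Icc 0 1 = {1} := by
    rw [Set.inter_eq_left]; simp [Set.singleton_subset_iff]
  rw [this]
  simp [Measure.real]

lemma aux_indicator_Ioc_int (M : Measure ℝ) [IsProbabilityMeasure M] :
    ∫ y in Set.Icc (0:ℝ) 1, Set.indicator (Set.Ioc 0 1) (fun _ => (1:ℝ)) y ∂M
      = (M (Set.Ioc 0 1)).toReal := by
  rw [integral_indicator measurableSet_Ioc, setIntegral_const,
    measureReal_restrict_apply measurableSet_Ioc]
  have : Set.Ioc (0:ℝ) 1 ∩ Set.Icc 0 1 = Set.Ioc 0 1 := by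
    rw [Set.inter_eq_left]; exact Set.Ioc_subset_Icc_self
  rw [this]
  simp [Measure.real]

lemma aux_Ioc_toReal (M : Measure ℝ) [IsProbabilityMeasure M]
    (hM : M (Set.Icc 0 1) = 1) :
    (M (Set.Ioc 0 1)).toReal = 1 - (M {0}).toReal := by
  have h1 : M {0} + M (Set.Ioc 0 1) = 1 := by
    rw [← measure_union (by simp) measurableSet_Ioc, ← Set.insert_eq,
      Set.Ioc_insert_left (by norm_num : (0:ℝ) ≤ 1), hM]
  have h2 := congrArg ENNReal.toReal h1
  rw [ENNReal.toReal_add (measure_ne_top M _) (measure_ne_top M _)] at h2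
  simp at h2
  linarith

lemma aux_Ioo_pos (M : Measure ℝ) [IsProbabilityMeasure M]
    (hM : M (Set.Icc 0 1) = 1) (hlt : M {0} + M {1} < 1) :
    0 < M (Set.Ioo 0 1) := by
  by_contra hc
  push_neg at hc
  have h0 : M (Set.Ioo 0 1) = 0 := le_antisymm (by simpa using hc) zero_le
  have hsub : Set.Icc (0:ℝ) 1 ⊆ ({0} ∪ {1}) ∪ Set.Ioo 0 1 := by
    intro x hx
    by_cases h1 : x = 0
    · exact Or.inl (Or.inl (by simp [h1]))
    by_cases h2 : x = 1
    · exact Or.inl (Or.inr (by simp [h2]))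
    · exact Or.inr ⟨lt_of_le_of_ne hx.1 (Ne.symm h1), lt_of_le_of_ne hx.2 h2⟩
  have : (1 : ENNReal) ≤ M {0} + M {1} := by
    calc (1 : ENNReal) = M (Set.Icc 0 1) := hM.symm
      _ ≤ M (({0} ∪ {1}) ∪ Set.Ioo 0 1) := measure_mono hsub
      _ ≤ M ({0} ∪ {1}) + M (Set.Ioo 0 1) := measure_union_le _ _
      _ ≤ (M {0} + M {1}) + M (Set.Ioo 0 1) := add_le_add_left (measure_union_le _ _) _
      _ = M {0} + M {1} := by rw [h0, add_zero]
  exact absurd this hlt.not_ge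

lemma aux_tendsto_zero (M : Measure ℝ) [IsProbabilityMeasure M] :
    Tendsto (fun t : ℝ => ∫ y in Set.Icc (0:ℝ) 1, t * (y / (1 - y + y * t)) ∂M)
      (nhdsWithin 0 (Set.Ioi 0))
      (nhds (∫ y in Set.Icc (0:ℝ) 1, Set.indicator {1} (fun _ => (1:ℝ)) y ∂M)) := by
  apply tendsto_integral_filter_of_dominated_convergence (fun _ => (1:ℝ))
  · exact Eventually.of_forall fun t =>
      (((aux_meas t).const_mul t).aestronglyMeasurable)
  · filter_upwards [self_mem_nhdsWithin] with t ht
    filter_upwards [ae_restrict_mem measurableSet_Icc] with y hy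
    rw [Real.norm_eq_abs, abs_of_nonneg (aux_g_nonneg hy.1 hy.2 ht)]
    exact aux_g_le_one hy.1 hy.2 ht
  · exact integrable_const 1
  · filter_upwards [ae_restrict_mem measurableSet_Icc] with y hy
    rcases eq_or_lt_of_le hy.2 with h | h
    · -- y = 1
      have heq : (fun t : ℝ => t * (y / (1 - y + y * t))) =ᶠ[nhdsWithin 0 (Set.Ioi 0)]
          fun _ => 1 := by
        filter_upwards [self_mem_nhdsWithin] with t ht
        rw [h]
        field_simp
        simpa using div_self (ne_of_gt (show (0:ℝ) < t from ht))
      rw [show Set.indicator {1} (fun _ => (1:ℝ)) y = 1 by simp [h]]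
      exact Tendsto.congr' heq.symm tendsto_const_nhds
    · -- y < 1
      have hne : (1 : ℝ) - y + y * 0 ≠ 0 := by simp; linarith
      have hc : ContinuousAt (fun t : ℝ => t * (y / (1 - y + y * t))) 0 :=
        continuousAt_id.mul (ContinuousAt.div continuousAt_const (by fun_prop) hne)
      have : Tendsto (fun t : ℝ => t * (y / (1 - y + y * t))) (nhdsWithin 0 (Set.Ioi 0))
          (nhds (0 * (y / (1 - y + y * 0)))) := hc.tendsto.mono_left nhdsWithin_le_nhds
      simpa [Set.indicator_of_notMem (by simpa using h.ne : y ∉ ({1} : Set ℝ))] using this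

lemma aux_tendsto_top (M : Measure ℝ) [IsProbabilityMeasure M] :
    Tendsto (fun t : ℝ => ∫ y in Set.Icc (0:ℝ) 1, t * (y / (1 - y + y * t)) ∂M)
      atTop
      (nhds (∫ y in Set.Icc (0:ℝ) 1, Set.indicator (Set.Ioc 0 1) (fun _ => (1:ℝ)) y ∂M)) := by
  apply tendsto_integral_filter_of_dominated_convergence (fun _ => (1:ℝ))
  · exact Eventually.of_forall fun t =>
      (((aux_meas t).const_mul t).aestronglyMeasurable)
  · filter_upwards [eventually_gt_atTop 0] with t ht
    filter_upwards [ae_restrict_mem measurableSet_Icc] with y hy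
    rw [Real.norm_eq_abs, abs_of_nonneg (aux_g_nonneg hy.1 hy.2 ht)]
    exact aux_g_le_one hy.1 hy.2 ht
  · exact integrable_const 1
  · filter_upwards [ae_restrict_mem measurableSet_Icc] with y hy
    rcases eq_or_lt_of_le hy.1 with h | h
    · -- y = 0
      have heq : (fun t : ℝ => t * (y / (1 - y + y * t))) = fun _ => 0 := by
        funext t; rw [← h]; simp
      rw [heq, show Set.indicator (Set.Ioc (0:ℝ) 1) (fun _ => (1:ℝ)) y = 0 by
        simp [← h]]
      exact tendsto_const_nhds
    · -- y > 0
      have h1 : Tendsto (fun t : ℝ => (1 - y) / t + y) atTop (nhds (0 + y)) :=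
        (tendsto_const_nhds.div_atTop tendsto_id).add tendsto_const_nhds
      have h2 : Tendsto (fun t : ℝ => y / ((1 - y) / t + y)) atTop (nhds (y / (0 + y))) :=
        tendsto_const_nhds.div h1 (by simpa using h.ne')
      have heq : (fun t : ℝ => y / ((1 - y) / t + y)) =ᶠ[atTop]
          fun t : ℝ => t * (y / (1 - y + y * t)) := by
        filter_upwards [eventually_gt_atTop 0] with t ht
        have d := aux_denom_pos hy.1 hy.2 ht
        field_simp
      have := Tendsto.congr' heq h2
      simpa [Set.indicator_of_mem (Set.mem_Ioc.2 ⟨h, hy.2⟩), h.ne'] using this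

/-- Properties of `Φ(t) = t ∫ y/(1-y+yt) dM(y)` for a probability measure `M`
on `[0,1]`: limits at `0+` and `+∞`, and, when `M({0}) + M({1}) < 1`, strict
monotonicity, continuity, and bijectivity onto `(M({1}), 1 - M({0}))`. -/
theorem stmt_4 (M : Measure ℝ) [IsProbabilityMeasure M]
    (hM : M (Set.Icc 0 1) = 1) :
    Filter.Tendsto
      (fun t : ℝ => t * ∫ y in Set.Icc (0:ℝ) 1, y / (1 - y + y * t) ∂M)
      (nhdsWithin 0 (Set.Ioi 0)) (nhds (M {1}).toReal) ∧
    Filter.Tendsto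
      (fun t : ℝ => t * ∫ y in Set.Icc (0:ℝ) 1, y / (1 - y + y * t) ∂M)
      Filter.atTop (nhds (1 - (M {0}).toReal)) ∧
    (M (Set.Ioc 0 1)).toReal = 1 - (M {0}).toReal ∧
    (M {0} + M {1} < 1 →
      StrictMonoOn
        (fun t : ℝ => t * ∫ y in Set.Icc (0:ℝ) 1, y / (1 - y + y * t) ∂M)
        (Set.Ioi 0) ∧
      ContinuousOn
        (fun t : ℝ => t * ∫ y in Set.Icc (0:ℝ) 1, y / (1 - y + y * t) ∂M)
        (Set.Ioi 0) ∧
      Set.BijOn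
        (fun t : ℝ => t * ∫ y in Set.Icc (0:ℝ) 1, y / (1 - y + y * t) ∂M)
        (Set.Ioi 0) (Set.Ioo (M {1}).toReal (1 - (M {0}).toReal))) := by
  set Φ := fun t : ℝ => t * ∫ y in Set.Icc (0:ℝ) 1, y / (1 - y + y * t) ∂M with hΦ
  have hΦeq : ∀ t : ℝ, Φ t = ∫ y in Set.Icc (0:ℝ) 1, t * (y / (1 - y + y * t)) ∂M := by
    intro t
    rw [hΦ]
    exact (integral_const_mul t _).symm
  have key3 := aux_Ioc_toReal M hM
  have htend0 : Tendsto Φ (nhdsWithin 0 (Set.Ioi 0)) (nhds (M {1}).toReal) := by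
    have := aux_tendsto_zero M
    rw [aux_indicator_one_int M] at this
    exact this.congr fun t => (hΦeq t).symm
  have htendtop : Tendsto Φ atTop (nhds (1 - (M {0}).toReal)) := by
    have := aux_tendsto_top M
    rw [aux_indicator_Ioc_int M, key3] at this
    exact this.congr fun t => (hΦeq t).symm
  refine ⟨htend0, htendtop, key3, fun hlt => ?_⟩
  have hIoo := aux_Ioo_pos M hM hlt
  -- strict monotonicity
  have hmono : StrictMonoOn Φ (Set.Ioi 0) := by
    intro t₁ ht₁ t₂ ht₂ h12
    rw [hΦeq, hΦeq]
    apply aux_int_lt M (aux_integrableOn M ht₁) (aux_integrableOn M ht₂)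
      (fun y hy => aux_g_mono hy.1 hy.2 ht₁ h12.le)
      (fun y hy => aux_g_strictMono hy.1 hy.2 ht₁ h12) hIoo
  -- continuity
  have hcont : ContinuousOn Φ (Set.Ioi 0) := by
    intro t₀ ht₀
    apply ContinuousAt.continuousWithinAt
    apply ContinuousAt.mul continuousAt_id
    apply continuousAt_of_dominated (bound := fun _ => 2 / t₀)
    · exact Eventually.of_forall fun t => (aux_meas t).aestronglyMeasurable
    · filter_upwards [Ioi_mem_nhds (half_lt_self ht₀)] with t ht
      filter_upwards [ae_restrict_mem measurableSet_Icc] with y hy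
      have ht2 : t₀ / 2 < t := ht
      have ht' : 0 < t := lt_trans (half_pos ht₀) ht2
      have d := aux_denom_pos hy.1 hy.2 ht'
      rw [Real.norm_eq_abs, abs_of_nonneg (div_nonneg hy.1 d.le),
        div_le_div_iff₀ d ht₀]
      nlinarith [mul_le_mul_of_nonneg_left (show t₀ ≤ 2 * t by linarith) hy.1, hy.2,
        mul_nonneg hy.1 ht'.le]
    · exact integrable_const _
    · filter_upwards [ae_restrict_mem measurableSet_Icc] with y hy
      exact ContinuousAt.div continuousAt_const (by fun_prop)
        (ne_of_gt (aux_denom_pos hy.1 hy.2 ht₀))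
  refine ⟨hmono, hcont, ?_⟩
  -- maps-to
  have hmaps : Set.MapsTo Φ (Set.Ioi 0)
      (Set.Ioo (M {1}).toReal (1 - (M {0}).toReal)) := by
    intro t ht
    constructor
    · -- lower bound
      rw [hΦeq, ← aux_indicator_one_int M]
      apply aux_int_lt M
        ((integrable_const (1:ℝ)).indicator (measurableSet_singleton 1))
        (aux_integrableOn M ht) _ _ hIoo
      · intro y hy
        rcases eq_or_lt_of_le hy.2 with h | h
        · rw [show Set.indicator {1} (fun _ => (1:ℝ)) y = 1 by simp [h], h, aux_g_one ht]
        · rw [Set.indicator_of_notMem (by simpa using h.ne : y ∉ ({1} : Set ℝ))]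
          exact aux_g_nonneg hy.1 hy.2 ht
      · intro y hy
        rw [Set.indicator_of_notMem (by simpa using hy.2.ne : y ∉ ({1} : Set ℝ))]
        exact mul_pos ht (div_pos hy.1 (aux_denom_pos hy.1.le hy.2.le ht))
    · -- upper bound
      rw [hΦeq, ← key3, ← aux_indicator_Ioc_int M]
      apply aux_int_lt M (aux_integrableOn M ht)
        ((integrable_const (1:ℝ)).indicator measurableSet_Ioc) _ _ hIoo
      · intro y hy
        rcases eq_or_lt_of_le hy.1 with h | h
        · rw [← h]
          simp
        · rw [Set.indicator_of_mem (Set.mem_Ioc.2 ⟨h, hy.2⟩)]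
          exact aux_g_le_one hy.1 hy.2 ht
      · intro y hy
        rw [Set.indicator_of_mem (Set.mem_Ioc.2 ⟨hy.1, hy.2.le⟩)]
        exact aux_g_lt_one hy.1.le hy.2 ht
  refine ⟨hmaps, hmono.injOn, ?_⟩
  -- surjectivity
  intro v hv
  obtain ⟨t₁, ht₁v, ht₁⟩ :=
    ((htend0.eventually_lt_const hv.1).and self_mem_nhdsWithin).exists
  obtain ⟨t₂, ht₂v, ht₂⟩ :=
    ((htendtop.eventually_const_lt hv.2).and (eventually_gt_atTop t₁)).exists
  have ht₁0 : (0:ℝ) < t₁ := ht₁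
  have ht₂0 : (0:ℝ) < t₂ := lt_trans ht₁0 ht₂
  have hIccsub : Set.Icc t₁ t₂ ⊆ Set.Ioi 0 := fun x hx => lt_of_lt_of_le ht₁0 hx.1
  have hivt := intermediate_value_Ioo (le_of_lt ht₂) (hcont.mono hIccsub)
  have hvmem : v ∈ Set.Ioo (Φ t₁) (Φ t₂) := ⟨ht₁v, ht₂v⟩
  obtain ⟨t, htmem, htv⟩ := hivt hvmem
  exact ⟨t, lt_trans ht₁0 htmem.1, htv⟩
end

section
/- Let $P_n^{(1)}, P_n^{(2)}$ be polynomials of degree at most $n$, and define the classical convolution $[P_n^{(1)} * P_n^{(2)}](z) = \int_0^z P_n^{(1)}(u) P_n^{(2)}(z - u)\,\mathrm{d}u$ and the finite free additive convolution $\boxplus_n$ by $\sum_k a_k^{(1)} x^k \boxplus_n \sum_k a_k^{(2)} x^k = \frac{1}{n!}\sum_{k=0}^n \frac{x^k}{k!} \sum_{j_1 + j_2 = n + k} a_{j_1}^{(1)} a_{j_2}^{(2)} j_1! j_2!$. Then $\frac{1}{n!} \left(\frac{\mathrm{d}}{\mathrm{d}z}\right)^{n+1} [P_n^{(1)} * P_n^{(2)}](z)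 = P_n^{(1)}(z) \boxplus_n P_n^{(2)}(z)$. -/
open Polynomial

lemma beta_nat (k : ℕ) : ∀ j : ℕ, ∫ t in (0:ℝ)..1, t^j * (1-t)^k
    = (j.factorial * k.factorial : ℝ) / ((j+k+1).factorial) := by
  induction k with
  | zero =>
    intro j
    have : ((j.factorial : ℝ)) ≠ 0 := Nat.cast_ne_zero.2 (Nat.factorial_ne_zero _)
    simp [integral_pow, Nat.factorial_succ]
    field_simp
  | succ k ih =>
    intro j
    have hj : ((j:ℝ)+1) ≠ 0 := by positivity
    have hu : ∀ x ∈ Set.uIcc (0:ℝ) 1, HasDerivAt (fun t : ℝ => (1-t)^(k+1))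
        (-((k+1) * (1-x)^k)) x := by
      intro x _
      have h := (((hasDerivAt_id x).const_sub 1).fun_pow (k+1))
      simpa [mul_comm, mul_assoc] using h
    have hv : ∀ x ∈ Set.uIcc (0:ℝ) 1, HasDerivAt (fun t : ℝ => t^(j+1) / (j+1))
        (x^j) x := by
      intro x _
      have h := (hasDerivAt_pow (j+1) x).div_const (j+1)
      have h2 : ((j:ℝ)+1) * x ^ j / ((j:ℝ)+1) = x ^ j := by
        field_simp
      simpa [h2] using h
    have key := intervalIntegral.integral_mul_deriv_eq_deriv_mul hu hv
      (by apply Continuous.intervalIntegrable; continuity)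
      (by apply Continuous.intervalIntegrable; continuity)
    have h1 : (∫ t in (0:ℝ)..1, t^j * (1-t)^(k+1))
        = ((k:ℝ)+1)/((j:ℝ)+1) * ∫ t in (0:ℝ)..1, t^(j+1) * (1-t)^k := by
      rw [show (∫ t in (0:ℝ)..1, t^j * (1-t)^(k+1))
          = ∫ t in (0:ℝ)..1, (1-t)^(k+1) * t^j by
        congr 1; ext t; ring]
      rw [key]
      have heq : ∀ x : ℝ, -(((k:ℝ)+1) * (1-x)^k) * (x^(j+1)/((j:ℝ)+1))
          = -(((k:ℝ)+1)/((j:ℝ)+1) * (x^(j+1)*(1-x)^k)) := by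
        intro x; ring
      simp only [heq]
      rw [intervalIntegral.integral_neg, intervalIntegral.integral_const_mul]
      simp [zero_pow]
    rw [h1, ih (j+1)]
    have hfac : (j+1+k+1) = (j+(k+1)+1) := by omega
    rw [hfac]
    have hne : ((j + (k+1) + 1).factorial : ℝ) ≠ 0 := Nat.cast_ne_zero.2 (Nat.factorial_ne_zero _)
    rw [Nat.factorial_succ (j), Nat.factorial_succ k]
    push_cast
    field_simp

lemma reindex_sum (n : ℕ) (f : ℕ → ℕ → ℝ) (h1 : ∀ j k, n < j → f j k = 0)
    (h2 : ∀ j k, n < k → f j k = 0) :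
    ∑ j ∈ Finset.range (n+1), ∑ k ∈ Finset.range (n+1), f j k
      = ∑ s ∈ Finset.range (2*n+1), ∑ j ∈ Finset.range (s+1), f j (s-j) := by
  have step1 : ∀ s ∈ Finset.range (2*n+1),
      (∑ j ∈ Finset.range (s+1), f j (s-j))
        = ∑ j ∈ Finset.range (2*n+1), if j ≤ s then f j (s-j) else 0 := by
    intro s hs
    rw [Finset.mem_range] at hs
    rw [← Finset.sum_subset (Finset.range_subset_range.2 (by omega : s+1 ≤ 2*n+1))]
    · apply Finset.sum_congr rfl
      intro j hj
      rw [Finset.mem_range] at hj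
      rw [if_pos (by omega)]
    · intro j _ hj
      rw [Finset.mem_range] at hj
      rw [if_neg (by omega)]
  rw [Finset.sum_congr rfl step1]
  conv_rhs => rw [Finset.sum_comm]
  have step2 : ∀ j, j ≤ 2*n → (∑ s ∈ Finset.range (2*n+1), if j ≤ s then f j (s-j) else 0)
      = ∑ k ∈ Finset.range (2*n+1-j), f j k := by
    intro j hj
    rw [Finset.range_eq_Ico, ← Finset.sum_Ico_consecutive _ (Nat.zero_le j) (by omega : j ≤ 2*n+1)]
    rw [Finset.sum_Ico_eq_sum_range, Finset.sum_Ico_eq_sum_range]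
    have e1 : (∑ i ∈ Finset.range (j - 0), if j ≤ 0 + i then f j (0 + i - j) else 0) = 0 := by
      apply Finset.sum_eq_zero
      intro i hi
      rw [Finset.mem_range] at hi
      rw [if_neg (by omega)]
    rw [e1, zero_add]
    apply Finset.sum_congr rfl
    intro i _
    rw [if_pos (by omega)]
    congr 1
    omega
  symm
  rw [Finset.sum_congr rfl (fun j hj => step2 j (by rw [Finset.mem_range] at hj; omega))]
  symm
  rw [← Finset.sum_subset (Finset.range_subset_range.2 (by omega : n+1 ≤ 2*n+1))]
  · apply Finset.sum_congr rfl
    intro j hj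
    rw [Finset.mem_range] at hj
    rw [← Finset.sum_subset (Finset.range_subset_range.2 (by omega : n+1 ≤ 2*n+1-j))]
    intro k _ hk
    rw [Finset.mem_range] at hk
    exact h2 j k (by omega)
  · intro j _ hj
    rw [Finset.mem_range] at hj
    exact Finset.sum_eq_zero fun k _ => h1 j k (by omega)

lemma iter_deriv_poly (m : ℕ) : ∀ p : Polynomial ℝ,
    deriv^[m] (fun x => p.eval x) = fun x => (derivative^[m] p).eval x := by
  induction m with
  | zero => intro p; rfl
  | succ m ih =>
    intro p
    rw [Function.iterate_succ_apply, Function.iterate_succ_apply,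
      show _root_.deriv (fun x => p.eval x) = fun x => (derivative p).eval x from
        funext fun x => Polynomial.deriv p]
    exact ih _

lemma conv_eval (n : ℕ) (P Q : Polynomial ℝ) (hP : P.natDegree ≤ n) (hQ : Q.natDegree ≤ n)
    (z : ℝ) :
    (∫ u in (0:ℝ)..z, P.eval u * Q.eval (z-u))
      = ∑ j ∈ Finset.range (n+1), ∑ k ∈ Finset.range (n+1),
          P.coeff j * Q.coeff k *
            ((j.factorial * k.factorial : ℝ) / ((j+k+1).factorial)) * z^(j+k+1) := by
  have hsub := intervalIntegral.smul_integral_comp_mul_left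
    (fun u => P.eval u * Q.eval (z-u)) (a := 0) (b := 1) z
  simp only [mul_zero, mul_one] at hsub
  rw [← hsub]
  have expand : ∀ t : ℝ, P.eval (z*t) * Q.eval (z - z*t)
      = ∑ j ∈ Finset.range (n+1), ∑ k ∈ Finset.range (n+1),
          (P.coeff j * Q.coeff k * z^(j+k)) * (t^j * (1-t)^k) := by
    intro t
    rw [Polynomial.eval_eq_sum_range' (Nat.lt_succ_of_le hP),
      show z - z*t = z*(1-t) by ring,
      Polynomial.eval_eq_sum_range' (Nat.lt_succ_of_le hQ), Finset.sum_mul_sum]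
    apply Finset.sum_congr rfl
    intro j _
    apply Finset.sum_congr rfl
    intro k _
    rw [mul_pow, mul_pow]
    ring
  simp only [expand]
  rw [intervalIntegral.integral_finset_sum]
  · rw [Finset.smul_sum]
    apply Finset.sum_congr rfl
    intro j _
    rw [intervalIntegral.integral_finset_sum]
    · rw [Finset.smul_sum]
      apply Finset.sum_congr rfl
      intro k _
      rw [intervalIntegral.integral_const_mul, beta_nat]
      rw [smul_eq_mul]
      ring
    · intro k _
      apply Continuous.intervalIntegrable
      continuity
  · intro j _
    apply Continuous.intervalIntegrable
    apply continuous_finset_sum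
    intro k _
    continuity

/-- The finite free additive convolution of two polynomials of degree at most
`n`. -/
noncomputable def ffAdd (n : ℕ) (P Q : Polynomial ℝ) : Polynomial ℝ :=
  ∑ k ∈ Finset.range (n + 1),
    C ((1 / (n.factorial : ℝ)) * (1 / (k.factorial : ℝ)) *
        ∑ j ∈ Finset.range (n + k + 1),
          P.coeff j * Q.coeff (n + k - j) *
            (j.factorial : ℝ) * ((n + k - j).factorial : ℝ)) * X ^ k

/-- The finite free additive convolution is, up to normalization, the
`(n+1)`-st derivative of the classical convolution. -/
theorem stmt_8 (n : ℕ) (P Q : Polynomial ℝ)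
    (hP : P.natDegree ≤ n) (hQ : Q.natDegree ≤ n) (z : ℝ) :
    (1 / (n.factorial : ℝ)) *
        (deriv^[n + 1] (fun z : ℝ => ∫ u in (0:ℝ)..z, P.eval u * Q.eval (z - u))) z
      = (ffAdd n P Q).eval z := by
  classical
  set b : ℕ → ℝ := fun s =>
    (∑ j ∈ Finset.range (s+1),
      P.coeff j * Q.coeff (s-j) * (j.factorial : ℝ) * ((s-j).factorial : ℝ))
        / ((s+1).factorial : ℝ) with hb
  set R : Polynomial ℝ := ∑ s ∈ Finset.range (2*n+1), C (b s) * X^(s+1) with hR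
  -- Step A: the convolution function equals eval of R
  have hfun : (fun z : ℝ => ∫ u in (0:ℝ)..z, P.eval u * Q.eval (z - u))
      = fun z => R.eval z := by
    funext w
    rw [conv_eval n P Q hP hQ w]
    have hre := reindex_sum n
      (fun j k => P.coeff j * Q.coeff k *
        ((j.factorial * k.factorial : ℝ) / ((j+k+1).factorial)) * w^(j+k+1))
      (fun j k hj => by
        have h0 := Polynomial.coeff_eq_zero_of_natDegree_lt (lt_of_le_of_lt hP hj)
        simp [h0])
      (fun j k hk => by
        have h0 := Polynomial.coeff_eq_zero_of_natDegree_lt (lt_of_le_of_lt hQ hk)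
        simp [h0])
    rw [hre, hR]
    rw [Polynomial.eval_finset_sum]
    apply Finset.sum_congr rfl
    intro s hs
    simp only [eval_mul, eval_C, eval_pow, eval_X, hb]
    rw [Finset.sum_div, Finset.sum_mul]
    apply Finset.sum_congr rfl
    intro j hj
    rw [Finset.mem_range] at hj
    have hjs : j + (s - j) = s := by omega
    rw [hjs]
    ring
  rw [hfun, iter_deriv_poly]
  -- Step B: compute the iterated derivative of R
  rw [hR, Polynomial.iterate_derivative_sum]
  simp only [Polynomial.iterate_derivative_C_mul, Polynomial.iterate_derivative_X_pow_eq_C_mul]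
  rw [Polynomial.eval_finset_sum]
  simp only [eval_mul, eval_C, eval_pow, eval_X]
  rw [Finset.mul_sum]
  -- restrict to s ≥ n
  have hsubset : Finset.Ico n (2*n+1) ⊆ Finset.range (2*n+1) := by
    intro x hx; rw [Finset.mem_Ico] at hx; exact Finset.mem_range.2 hx.2
  have hzero : ∀ s ∈ Finset.range (2*n+1), s ∉ Finset.Ico n (2*n+1) →
      1/(n.factorial:ℝ) * (b s * (((s+1).descFactorial (n+1) : ℝ) * z^(s+1-(n+1)))) = 0 := by
    intro s hs hns
    rw [Finset.mem_range] at hs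
    rw [Finset.mem_Ico] at hns
    rw [Nat.descFactorial_eq_zero_iff_lt.2 (by omega : s+1 < n+1)]
    simp
  rw [← Finset.sum_subset hsubset hzero, Finset.sum_Ico_eq_sum_range,
    show 2*n+1-n = n+1 from by omega]
  rw [ffAdd, Polynomial.eval_finset_sum]
  apply Finset.sum_congr rfl
  intro m hm
  simp only [eval_mul, eval_C, eval_pow, eval_X, hb]
  rw [show n + m + 1 - (n+1) = m from by omega]
  have hdf : (m.factorial : ℝ) * ((n+m+1).descFactorial (n+1) : ℝ)
      = ((n+m+1).factorial : ℝ) := by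
    rw [← Nat.cast_mul]
    norm_cast
    have h := Nat.factorial_mul_descFactorial (show n+1 ≤ n+m+1 by omega)
    simpa [show n+m+1-(n+1) = m from by omega] using h
  have h1 : ((n+m+1).factorial : ℝ) ≠ 0 := Nat.cast_ne_zero.2 (Nat.factorial_ne_zero _)
  have h2 : (m.factorial : ℝ) ≠ 0 := Nat.cast_ne_zero.2 (Nat.factorial_ne_zero _)
  rw [show ((n+m+1).descFactorial (n+1) : ℝ) = ((n+m+1).factorial : ℝ)/(m.factorial : ℝ)
    from by field_simp [← hdf]; linear_combination hdf]
  field_simp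
end
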